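/- Let v and w be valuations on a ring B with kernels p = ker v and q = ker w satisfying p ⊆ q, with semi-valuation rings S_v ⊆ B_p and S_w ⊆ B_q respectively. Then w is a primary specialization of v if and only if the canonical homomorphism B_q → B_p maps S_w into S_v and the induced homomorphism S_w → S_v is a local homomorphism of local rings. -/

import Mathlib

open Classical

/-- A subgroup `Λ` of the units of `Γ` is *convex* if `γ ∈ Λ` whenever
`λ ≤ γ ≤ 1` or `1 ≤ γ ≤ λ` for some `λ ∈ Λ`. -/
def IsConvexSubgroup {Γ : Type*} [LinearOrderedCommGroupWithZero Γ] (Λ : Subgroup Γˣ) : Prop :=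
  ∀ γ : Γˣ, (∃ l ∈ Λ, (((l : Γ) ≤ (γ : Γ) ∧ (γ : Γ) ≤ 1) ∨ ((1 : Γ) ≤ (γ : Γ) ∧ (γ : Γ) ≤ (l : Γ)))) →
    γ ∈ Λ

/-- An element `g` of `Γ` lies in (the image with zero of) a subgroup `Λ` of `Γˣ`. -/
def MemWZ {Γ : Type*} [LinearOrderedCommGroupWithZero Γ] (Λ : Subgroup Γˣ) (g : Γ) : Prop :=
  ∃ u ∈ Λ, (u : Γ) = g

/-- `w` is, up to equivalence of valuations, a primary specialization of `v`: there is a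
valuation `w'` equivalent to `w` and a convex subgroup `Λ` of the value group of `v`
containing `cΓ_v` with `w' b = v b` if `v b ∈ Λ` and `w' b = 0` otherwise. -/
def IsPrimarySpecialization {B : Type*} [CommRing B] {Γ Γ' : Type*}
    [LinearOrderedCommGroupWithZero Γ] [LinearOrderedCommGroupWithZero Γ']
    (v : Valuation B Γ) (w : Valuation B Γ') : Prop :=
  ∃ w' : Valuation B Γ, w.IsEquiv w' ∧
    ∃ Λ : Subgroup Γˣ, IsConvexSubgroup Λ ∧ (∀ x : B, 1 ≤ v x → MemWZ Λ (v x)) ∧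
      ∀ x : B, (MemWZ Λ (v x) ∧ w' x = v x) ∨ (¬ MemWZ Λ (v x) ∧ w' x = 0)

section Aux

variable {B : Type*} [CommRing B] {Γ Γ' : Type*}
    [LinearOrderedCommGroupWithZero Γ] [LinearOrderedCommGroupWithZero Γ']

/-- The valuation sending `x` to `v x` if `x ∉ supp w` and `0` otherwise. -/
noncomputable def primVal (v : Valuation B Γ) (w : Valuation B Γ')
    (hlt : ∀ y ∈ w.supp, ∀ s, s ∉ w.supp → v y < v s) : Valuation B Γ where
  toFun x := if x ∈ w.supp then 0 else v x
  map_zero' := if_pos (zero_mem _)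
  map_one' := by
    show (if (1 : B) ∈ w.supp then (0 : Γ) else v 1) = 1
    rw [if_neg, v.map_one]
    intro h
    rw [Valuation.mem_supp_iff, w.map_one] at h
    exact one_ne_zero h
  map_mul' x y := by
    show (if x * y ∈ w.supp then (0 : Γ) else v (x * y)) =
      (if x ∈ w.supp then (0 : Γ) else v x) * (if y ∈ w.supp then (0 : Γ) else v y)
    by_cases hx : x ∈ w.supp
    · rw [if_pos (Ideal.mul_mem_right y _ hx), if_pos hx, zero_mul]
    by_cases hy : y ∈ w.supp
    · rw [if_pos (Ideal.mul_mem_left _ x hy), if_neg hx, if_pos hy, mul_zero]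
    · rw [if_neg, if_neg hx, if_neg hy, v.map_mul]
      intro h
      rcases (Ideal.isPrime_iff.mp inferInstance).2 h with h | h
      exacts [hx h, hy h]
  map_add_le_max' x y := by
    show (if x + y ∈ w.supp then (0 : Γ) else v (x + y)) ≤
      max (if x ∈ w.supp then (0 : Γ) else v x) (if y ∈ w.supp then (0 : Γ) else v y)
    by_cases hxy : x + y ∈ w.supp
    · rw [if_pos hxy]; exact zero_le'
    rw [if_neg hxy]
    by_cases hx : x ∈ w.supp
    · have hy : y ∉ w.supp := fun hy => hxy (add_mem hx hy)
      rw [if_pos hx, if_neg hy]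
      refine le_trans (v.map_add x y) (le_trans (max_le (le_of_lt (hlt x hx y hy)) le_rfl) ?_)
      exact le_max_right _ _
    by_cases hy : y ∈ w.supp
    · rw [if_neg hx, if_pos hy]
      refine le_trans (v.map_add x y) (le_trans (max_le le_rfl (le_of_lt (hlt y hy x hx))) ?_)
      exact le_max_left _ _
    · rw [if_neg hx, if_neg hy]; exact v.map_add x y

theorem primVal_apply (v : Valuation B Γ) (w : Valuation B Γ') (hlt) (x : B) :
    primVal v w hlt x = if x ∈ w.supp then 0 else v x := rfl

/-- The convex subgroup generated by the values `v s` for `s ∉ q`. -/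
def primSubgroup (v : Valuation B Γ) (q : Ideal B) [q.IsPrime] : Subgroup Γˣ where
  carrier := {γ | ∃ s₁ t₁ s₂ t₂ : B, s₁ ∉ q ∧ t₁ ∉ q ∧ s₂ ∉ q ∧ t₂ ∉ q ∧
    v t₁ ≤ (γ : Γ) * v s₁ ∧ (γ : Γ) * v t₂ ≤ v s₂}
  one_mem' := ⟨1, 1, 1, 1, q.primeCompl.one_mem, q.primeCompl.one_mem,
    q.primeCompl.one_mem, q.primeCompl.one_mem, by simp, by simp⟩
  mul_mem' := by
    rintro γ δ ⟨s₁, t₁, s₂, t₂, hs₁, ht₁, hs₂, ht₂, h₁, h₂⟩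
      ⟨s₁', t₁', s₂', t₂', hs₁', ht₁', hs₂', ht₂', h₁', h₂'⟩
    refine ⟨s₁ * s₁', t₁ * t₁', s₂ * s₂', t₂ * t₂', q.primeCompl.mul_mem hs₁ hs₁',
      q.primeCompl.mul_mem ht₁ ht₁', q.primeCompl.mul_mem hs₂ hs₂',
      q.primeCompl.mul_mem ht₂ ht₂', ?_, ?_⟩
    · rw [v.map_mul, v.map_mul, Units.val_mul, mul_mul_mul_comm]
      exact mul_le_mul' h₁ h₁'
    · rw [v.map_mul, v.map_mul, Units.val_mul, mul_mul_mul_comm]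
      exact mul_le_mul' h₂ h₂'
  inv_mem' := by
    rintro γ ⟨s₁, t₁, s₂, t₂, hs₁, ht₁, hs₂, ht₂, h₁, h₂⟩
    refine ⟨s₂, t₂, s₁, t₁, hs₂, ht₂, hs₁, ht₁, ?_, ?_⟩
    · have := mul_le_mul_right h₂ (↑γ⁻¹ : Γ)
      rwa [← mul_assoc, ← Units.val_mul, inv_mul_cancel, Units.val_one, one_mul] at this
    · have := mul_le_mul_right h₁ (↑γ⁻¹ : Γ)
      rwa [← mul_assoc, ← Units.val_mul, inv_mul_cancel, Units.val_one, one_mul] at this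

theorem primSubgroup_convex (v : Valuation B Γ) (q : Ideal B) [q.IsPrime] :
    IsConvexSubgroup (primSubgroup v q) := by
  rintro γ ⟨l, ⟨s₁, t₁, s₂, t₂, hs₁, ht₁, hs₂, ht₂, h₁, h₂⟩, hord⟩
  rcases hord with ⟨hl, h1⟩ | ⟨h1, hl⟩
  · refine ⟨s₁, t₁, 1, 1, hs₁, ht₁, q.primeCompl.one_mem, q.primeCompl.one_mem, ?_, ?_⟩
    · exact le_trans h₁ (mul_le_mul_left hl _)
    · simpa using h1
  · refine ⟨1, 1, s₂, t₂, q.primeCompl.one_mem, q.primeCompl.one_mem, hs₂, ht₂, ?_, ?_⟩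
    · simpa using h1
    · exact le_trans (mul_le_mul_left hl _) h₂

theorem mem_primSubgroup_of_not_mem (v : Valuation B Γ) (q : Ideal B) [q.IsPrime]
    {x : B} (hx : x ∉ q) (h0 : v x ≠ 0) : Units.mk0 (v x) h0 ∈ primSubgroup v q :=
  ⟨1, x, x, 1, q.primeCompl.one_mem, hx, hx, q.primeCompl.one_mem, by simp, by simp⟩

/-- The ring-level comparison condition. -/
def CCond (v : Valuation B Γ) (w : Valuation B Γ') : Prop :=
  ∀ b s : B, s ∉ w.supp → (w b ≤ w s → v b ≤ v s) ∧ (w b < w s → v b < v s)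

theorem C_of_primary (v : Valuation B Γ) (w : Valuation B Γ') (hpq : v.supp ≤ w.supp)
    (h : IsPrimarySpecialization v w) : CCond v w := by
  obtain ⟨w', hequiv, Λ, hconv, hcG, hspec⟩ := h
  intro b s hs
  have hws : w s ≠ 0 := fun h0 => hs ((w.mem_supp_iff s).2 h0)
  have hvs : v s ≠ 0 := fun h0 => hs (hpq ((v.mem_supp_iff s).2 h0))
  have hw's : w' s ≠ 0 := by
    intro h0
    apply hws
    rw [← le_zero_iff, ← w.map_zero]
    exact (hequiv s 0).2 (by rw [w'.map_zero, ← h0])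
  obtain ⟨hmemS, heqS⟩ := (hspec s).resolve_right fun h0 => hw's h0.2
  have hkey : ∀ c : B, ¬ MemWZ Λ (v c) → v c < v s := by
    intro c hc
    by_contra hcon
    push_neg at hcon
    have hvc : v c ≠ 0 := by
      intro h0; rw [h0, le_zero_iff] at hcon; exact hvs hcon
    apply hc
    rcases le_total (v c) 1 with h1 | h1
    · obtain ⟨us, husΛ, husv⟩ := hmemS
      exact ⟨Units.mk0 (v c) hvc,
        hconv _ ⟨us, husΛ, Or.inl ⟨by rw [husv]; exact hcon, h1⟩⟩, rfl⟩
    · exact hcG c h1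
  constructor
  · intro hle
    rcases hspec b with ⟨_, heq⟩ | ⟨hnm, _⟩
    · calc v b = w' b := heq.symm
        _ ≤ w' s := (hequiv b s).1 hle
        _ = v s := heqS
    · exact le_of_lt (hkey b hnm)
  · intro hlt
    rcases hspec b with ⟨_, heq⟩ | ⟨hnm, _⟩
    · have hlt' : w' b < w' s := not_le.1 fun hh => not_le.2 hlt ((hequiv s b).2 hh)
      calc v b = w' b := heq.symm
        _ < w' s := hlt'
        _ = v s := heqS
    · exact hkey b hnm

theorem primary_of_C (v : Valuation B Γ) (w : Valuation B Γ') (hpq : v.supp ≤ w.supp)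
    (hC : CCond v w) : IsPrimarySpecialization v w := by
  have hws : ∀ s : B, s ∉ w.supp → w s ≠ 0 := fun s hs h0 => hs ((w.mem_supp_iff s).2 h0)
  have hvs : ∀ s : B, s ∉ w.supp → v s ≠ 0 := fun s hs h0 => hs (hpq ((v.mem_supp_iff s).2 h0))
  have hone : (1 : B) ∉ w.supp := fun h =>
    one_ne_zero (by rw [← w.map_one]; exact (w.mem_supp_iff 1).1 h)
  have hCle : ∀ b s : B, s ∉ w.supp → v s ≤ v b → w s ≤ w b := fun b s hs h =>
    not_lt.1 fun hl => not_lt.2 h ((hC b s hs).2 hl)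
  have hltq : ∀ y ∈ w.supp, ∀ s, s ∉ w.supp → v y < v s := by
    intro y hy s hs
    refine (hC y s hs).2 ?_
    rw [(w.mem_supp_iff y).1 hy]
    exact zero_lt_iff.2 (hws s hs)
  have hmem : ∀ x : B, MemWZ (primSubgroup v w.supp) (v x) ↔ x ∉ w.supp := by
    intro x
    constructor
    · rintro ⟨u, ⟨s₁, t₁, s₂, t₂, hs₁, ht₁, hs₂, ht₂, h₁, h₂⟩, hux⟩ hxq
      have h3 : v t₁ ≤ v (x * s₁) := by rw [v.map_mul, ← hux]; exact h₁
      have h4 := hCle (x * s₁) t₁ ht₁ h3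
      rw [w.map_mul, (w.mem_supp_iff x).1 hxq, zero_mul, le_zero_iff] at h4
      exact hws t₁ ht₁ h4
    · intro hx
      exact ⟨Units.mk0 (v x) (hvs x hx), mem_primSubgroup_of_not_mem v w.supp hx _, rfl⟩
  refine ⟨primVal v w hltq, ?_, primSubgroup v w.supp, primSubgroup_convex v w.supp, ?_, ?_⟩
  · intro r s
    by_cases hr : r ∈ w.supp <;> by_cases hs : s ∈ w.supp
    · simp [primVal_apply, if_pos hr, if_pos hs, (w.mem_supp_iff r).1 hr,
        (w.mem_supp_iff s).1 hs]
    · simp [primVal_apply, if_pos hr, if_neg hs, (w.mem_supp_iff r).1 hr, zero_le']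
    · rw [primVal_apply, primVal_apply, if_neg hr, if_pos hs,
        (w.mem_supp_iff s).1 hs, le_zero_iff, le_zero_iff]
      exact ⟨fun h => absurd h (hws r hr), fun h => absurd h (hvs r hr)⟩
    · rw [primVal_apply, primVal_apply, if_neg hr, if_neg hs]
      exact ⟨fun h => (hC r s hs).1 h, fun h => hCle s r hr h⟩
  · intro x hx
    refine (hmem x).2 ?_
    intro hxq
    have h2 := hCle x 1 hone (by rw [v.map_one]; exact hx)
    rw [w.map_one, (w.mem_supp_iff x).1 hxq, le_zero_iff] at h2
    exact one_ne_zero h2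
  · intro x
    by_cases hx : x ∈ w.supp
    · exact Or.inr ⟨fun h => (hmem x).1 h hx, by rw [primVal_apply, if_pos hx]⟩
    · exact Or.inl ⟨(hmem x).2 hx, by rw [primVal_apply, if_neg hx]⟩

end Aux

section Loc

variable {B : Type*} [CommRing B] {Γ Γ' : Type*}
    [LinearOrderedCommGroupWithZero Γ] [LinearOrderedCommGroupWithZero Γ']
    (v : Valuation B Γ) (w : Valuation B Γ')
    (hpq : v.supp ≤ w.supp)
    (f : Localization.AtPrime w.supp →+* Localization.AtPrime v.supp)
    (hf : f.comp (algebraMap B (Localization.AtPrime w.supp))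
      = algebraMap B (Localization.AtPrime v.supp))

include hf in
theorem loc_calc (b : B) (s : w.supp.primeCompl) :
    (w.extendToLocalization le_rfl (Localization.AtPrime w.supp))
        (IsLocalization.mk' (Localization.AtPrime w.supp) b s) * w s = w b ∧
    (v.extendToLocalization le_rfl (Localization.AtPrime v.supp))
        (f (IsLocalization.mk' (Localization.AtPrime w.supp) b s)) * v s = v b := by
  have h1 := IsLocalization.mk'_spec (Localization.AtPrime w.supp) b s
  constructor
  · have h2 := congrArg (w.extendToLocalization le_rfl (Localization.AtPrime w.supp)) h1
    rwa [map_mul, Valuation.extendToLocalization_apply_map_apply,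
      Valuation.extendToLocalization_apply_map_apply] at h2
  · have h2 := congrArg (fun z => (v.extendToLocalization le_rfl (Localization.AtPrime v.supp))
      (f z)) h1
    simp only [map_mul] at h2
    rwa [← RingHom.comp_apply f _ (s : B), ← RingHom.comp_apply f _ b, hf,
      Valuation.extendToLocalization_apply_map_apply,
      Valuation.extendToLocalization_apply_map_apply] at h2

theorem valcmp_le {Γ : Type*} [LinearOrderedCommGroupWithZero Γ] {a b c : Γ}
    (h : a * c = b) (hc : c ≠ 0) : a ≤ 1 ↔ b ≤ c := by
  rw [← h]; exact (mul_le_iff_le_one_left (zero_lt_iff.2 hc)).symm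

theorem valcmp_lt {Γ : Type*} [LinearOrderedCommGroupWithZero Γ] {a b c : Γ}
    (h : a * c = b) (hc : c ≠ 0) : a < 1 ↔ b < c := by
  rw [← h]; exact (mul_lt_iff_lt_one_left (zero_lt_iff.2 hc)).symm

include hpq hf in
theorem C_iff_loc : CCond v w ↔
    ((∀ x : Localization.AtPrime w.supp,
        (w.extendToLocalization le_rfl (Localization.AtPrime w.supp)) x ≤ 1 →
        (v.extendToLocalization le_rfl (Localization.AtPrime v.supp)) (f x) ≤ 1) ∧
      (∀ x : Localization.AtPrime w.supp,
        (w.extendToLocalization le_rfl (Localization.AtPrime w.supp)) x < 1 →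
        (v.extendToLocalization le_rfl (Localization.AtPrime v.supp)) (f x) < 1)) := by
  have hws : ∀ s : B, s ∉ w.supp → w s ≠ 0 := fun s hs h0 => hs ((w.mem_supp_iff s).2 h0)
  have hvs : ∀ s : B, s ∉ w.supp → v s ≠ 0 := fun s hs h0 => hs (hpq ((v.mem_supp_iff s).2 h0))
  constructor
  · intro hC
    constructor
    · intro x hx
      obtain ⟨⟨b, s⟩, rfl⟩ := IsLocalization.mk'_surjective w.supp.primeCompl x
      obtain ⟨hw1, hv1⟩ := loc_calc v w f hf b s
      exact (valcmp_le hv1 (hvs s s.2)).2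
        ((hC b s s.2).1 ((valcmp_le hw1 (hws s s.2)).1 hx))
    · intro x hx
      obtain ⟨⟨b, s⟩, rfl⟩ := IsLocalization.mk'_surjective w.supp.primeCompl x
      obtain ⟨hw1, hv1⟩ := loc_calc v w f hf b s
      exact (valcmp_lt hv1 (hvs s s.2)).2
        ((hC b s s.2).2 ((valcmp_lt hw1 (hws s s.2)).1 hx))
  · rintro ⟨hle, hlt⟩ b s hs
    obtain ⟨hw1, hv1⟩ := loc_calc v w f hf b ⟨s, hs⟩
    constructor
    · intro h
      exact (valcmp_le hv1 (hvs s hs)).1 (hle _ ((valcmp_le hw1 (hws s hs)).2 h))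
    · intro h
      exact (valcmp_lt hv1 (hvs s hs)).1 (hlt _ ((valcmp_lt hw1 (hws s hs)).2 h))

end Loc

theorem stmt12 {B : Type*} [CommRing B] {Γ Γ' : Type*}
    [LinearOrderedCommGroupWithZero Γ] [LinearOrderedCommGroupWithZero Γ']
    (v : Valuation B Γ) (w : Valuation B Γ')
    (hpq : v.supp ≤ w.supp)
    (f : Localization.AtPrime w.supp →+* Localization.AtPrime v.supp)
    (hf : f.comp (algebraMap B (Localization.AtPrime w.supp))
      = algebraMap B (Localization.AtPrime v.supp)) :
    IsPrimarySpecialization v w ↔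
      ((∀ x : Localization.AtPrime w.supp,
          (w.extendToLocalization le_rfl (Localization.AtPrime w.supp)) x ≤ 1 →
          (v.extendToLocalization le_rfl (Localization.AtPrime v.supp)) (f x) ≤ 1) ∧
        (∀ x : Localization.AtPrime w.supp,
          (w.extendToLocalization le_rfl (Localization.AtPrime w.supp)) x < 1 →
          (v.extendToLocalization le_rfl (Localization.AtPrime v.supp)) (f x) < 1)) := by
  rw [← C_iff_loc v w hpq f hf]
  exact ⟨fun h => C_of_primary v w hpq h, fun h => primary_of_C v w hpq h⟩
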